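/- Let G be a finite group with a + b ≥ d(G). If the swap graph Σ_{a+b}(G) (vertices are generating (a+b)-tuples, adjacent iff they differ in exactly one entry) is connected, then the graph Γ*_{a,b}(G) is connected. -/

import Mathlib

/-- The graph `Γ_{a,b}(G)` on `G^a ∪ G^b` (encoded as a sum type): two tuples of
complementary lengths are adjacent iff their combined entries generate `G`. -/
def genGraph (G : Type*) [Group G] (a b : ℕ) :
    SimpleGraph ((Fin a → G) ⊕ (Fin b → G)) where
  Adj u v := ∃ (x : Fin a → G) (y : Fin b → G),
    ((u = Sum.inl x ∧ v = Sum.inr y) ∨ (u = Sum.inr y ∧ v = Sum.inl x)) ∧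
    Subgroup.closure (Set.range x ∪ Set.range y) = ⊤
  symm := by
    constructor
    rintro u v ⟨x, y, (⟨h1, h2⟩ | ⟨h1, h2⟩), hgen⟩
    · exact ⟨x, y, Or.inr ⟨h2, h1⟩, hgen⟩
    · exact ⟨x, y, Or.inl ⟨h2, h1⟩, hgen⟩
  loopless := by
    constructor
    rintro u ⟨x, y, (⟨h1, h2⟩ | ⟨h1, h2⟩), -⟩ <;> simp_all

/-- `Γ*_{a,b}(G)` is connected: any two non-isolated vertices of `Γ_{a,b}(G)`
are joined by a path. -/
def gammaStarConnected (G : Type*) [Group G] (a b : ℕ) : Prop :=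
  ∀ u v : (Fin a → G) ⊕ (Fin b → G),
    (∃ w, (genGraph G a b).Adj u w) → (∃ w, (genGraph G a b).Adj v w) →
    (genGraph G a b).Reachable u v

/-- The swap graph `Σ_d(G)` on ordered generating `d`-tuples of `G`: two tuples
are adjacent iff they differ in exactly one entry. -/
def swapGraph (G : Type*) [Group G] (d : ℕ) :
    SimpleGraph {x : Fin d → G // Subgroup.closure (Set.range x) = ⊤} where
  Adj u v := u ≠ v ∧ ∃ i, ∀ j, j ≠ i → u.1 j = v.1 j
  symm := by
    constructor
    rintro u v ⟨hne, i, h⟩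
    exact ⟨hne.symm, i, fun j hj => (h j hj).symm⟩
  loopless := by constructor; rintro u ⟨hne, -⟩; exact hne rfl

section Aux

variable {G : Type*} [Group G] {a b : ℕ}

/-- first `a` entries -/
def fstT (a b : ℕ) (z : Fin (a + b) → G) : Fin a → G := fun i => z (Fin.castAdd b i)

/-- last `b` entries -/
def sndT (a b : ℕ) (z : Fin (a + b) → G) : Fin b → G := fun i => z (Fin.natAdd a i)

lemma range_split (z : Fin (a + b) → G) :
    Set.range (fstT a b z) ∪ Set.range (sndT a b z) = Set.range z := by
  ext g
  simp only [Set.mem_union, Set.mem_range, fstT, sndT]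
  constructor
  · rintro (⟨i, rfl⟩ | ⟨i, rfl⟩) <;> exact ⟨_, rfl⟩
  · rintro ⟨j, rfl⟩
    by_cases hj : (j : ℕ) < a
    · exact Or.inl ⟨⟨j, hj⟩, by congr 1 <;> exact Fin.ext rfl⟩
    · refine Or.inr ⟨⟨(j : ℕ) - a, by omega⟩, ?_⟩
      congr 1 <;> exact Fin.ext (by simp only [Fin.natAdd]; omega)

lemma fstT_append (x : Fin a → G) (y : Fin b → G) : fstT a b (Fin.append x y) = x := by
  funext i; simp [fstT, Fin.append_left]

lemma sndT_append (x : Fin a → G) (y : Fin b → G) : sndT a b (Fin.append x y) = y := by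
  funext i; simp [sndT, Fin.append_right]

lemma adj_inl_inr {x : Fin a → G} {y : Fin b → G}
    (hg : Subgroup.closure (Set.range x ∪ Set.range y) = ⊤) :
    (genGraph G a b).Adj (Sum.inl x) (Sum.inr y) :=
  ⟨x, y, Or.inl ⟨rfl, rfl⟩, hg⟩

/-- the canonical vertex of a generating tuple -/
def canonV (a b : ℕ) (z : {x : Fin (a + b) → G // Subgroup.closure (Set.range x) = ⊤}) :
    (Fin a → G) ⊕ (Fin b → G) := Sum.inl (fstT a b z.1)

lemma adj_fst_snd (z : {x : Fin (a + b) → G // Subgroup.closure (Set.range x) = ⊤}) :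
    (genGraph G a b).Adj (Sum.inl (fstT a b z.1)) (Sum.inr (sndT a b z.1)) :=
  adj_inl_inr (by rw [range_split]; exact z.2)

lemma reachable_of_swap_adj {z z' : {x : Fin (a + b) → G // Subgroup.closure (Set.range x) = ⊤}}
    (hzz : (swapGraph G (a + b)).Adj z z') :
    (genGraph G a b).Reachable (canonV a b z) (canonV a b z') := by
  obtain ⟨-, i, hi⟩ := hzz
  by_cases hia : (i : ℕ) < a
  · -- the second halves agree
    have hs : sndT a b z.1 = sndT a b z'.1 := by
      funext k
      refine hi _ (fun hk => ?_)
      have : ((Fin.natAdd a k : Fin (a + b)) : ℕ) = (i : ℕ) := by rw [hk]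
      simp [Fin.natAdd] at this; omega
    have h1 := adj_fst_snd (a := a) (b := b) z
    have h2 := adj_fst_snd (a := a) (b := b) z'
    rw [← hs] at h2
    exact (h1.reachable).trans h2.symm.reachable
  · -- the first halves agree
    have hf : fstT a b z.1 = fstT a b z'.1 := by
      funext k
      refine hi _ (fun hk => ?_)
      have : ((Fin.castAdd b k : Fin (a + b)) : ℕ) = (i : ℕ) := by rw [hk]
      simp [Fin.castAdd] at this; omega
    unfold canonV
    rw [hf]

lemma reachable_of_swap_reachable
    {z z' : {x : Fin (a + b) → G // Subgroup.closure (Set.range x) = ⊤}}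
    (hzz : (swapGraph G (a + b)).Reachable z z') :
    (genGraph G a b).Reachable (canonV a b z) (canonV a b z') := by
  obtain ⟨w⟩ := hzz
  induction w with
  | nil => rfl
  | cons hadj _ ih => exact (reachable_of_swap_adj hadj).trans ih

lemma reachable_canon (u : (Fin a → G) ⊕ (Fin b → G))
    (hu : ∃ w, (genGraph G a b).Adj u w) :
    ∃ z : {x : Fin (a + b) → G // Subgroup.closure (Set.range x) = ⊤},
      (genGraph G a b).Reachable u (canonV a b z) := by
  obtain ⟨w, x, y, hcase, hg⟩ := hu
  have hgen : Subgroup.closure (Set.range (Fin.append x y)) = ⊤ := by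
    rw [← range_split, fstT_append, sndT_append]; exact hg
  refine ⟨⟨Fin.append x y, hgen⟩, ?_⟩
  have hcanon : canonV a b (⟨Fin.append x y, hgen⟩ :
      {x : Fin (a + b) → G // Subgroup.closure (Set.range x) = ⊤}) = Sum.inl x := by
    simp [canonV, fstT_append]
  rw [hcanon]
  rcases hcase with ⟨h1, -⟩ | ⟨h1, -⟩
  · rw [h1]
  · rw [h1]
    exact (adj_inl_inr hg).symm.reachable

end Aux

theorem stmt_8 {G : Type*} [Group G] [Finite G] (a b : ℕ)
    (hab : Group.rank G ≤ a + b)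
    (h : (swapGraph G (a + b)).Connected) :
    gammaStarConnected G a b := by
  intro u v hu hv
  obtain ⟨z, hz⟩ := reachable_canon u hu
  obtain ⟨z', hz'⟩ := reachable_canon v hv
  exact hz.trans ((reachable_of_swap_reachable (h.preconnected z z')).trans hz'.symm)
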